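/- For integers m ≥ λ ≥ 0 and r ≥ 1, the cardinality of the top set T_{m,r}(λ) for the r-reduced affine rook-Brauer algebra equals C(m,λ) · ∑_{p=0}^{⌊(m-λ)/2⌋} C(m-λ, 2p)·(2p-1)!!·(2r-1)^p. -/

import Mathlib

/-- A top diagram for the `r`-reduced affine rook-Brauer algebra on `m` points with `λ`
through lines: a set `through` of `λ` points carrying through lines, a partial matching of
the remaining points (an involution `σ` whose fixed points comprise `through` and the
isolated points), and a displacement label in `{-(r-1), …, r-1}` for each matched pair. -/
structure AffineRookBrauerTop (m lam r : ℕ) where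
  through : Finset (Fin m)
  σ : Fin m → Fin m
  δ : Fin m → ℤ
  card_through : through.card = lam
  invol : ∀ i, σ (σ i) = i
  through_fixed : ∀ i ∈ through, σ i = i
  skew : ∀ i, δ (σ i) = -δ i
  bound : ∀ i, -(r - 1 : ℤ) ≤ δ i ∧ δ i ≤ (r - 1 : ℤ)


def Wc (q : ℕ) : ℕ → ℕ
  | 0 => 1
  | 1 => 1
  | n+2 => Wc q (n+1) + q * (n+1) * Wc q n

lemma term_vanish (n p q : ℕ) (hp : n / 2 + 1 ≤ p) :
    n.choose (2*p) * Nat.doubleFactorial (2*p-1) * q^p = 0 := by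
  have : n < 2 * p := by omega
  simp [Nat.choose_eq_zero_of_lt this]

lemma Wc_extend (q n K : ℕ) (hK : n/2 + 1 ≤ K) :
    (∑ p ∈ Finset.range (n/2+1), n.choose (2*p) * Nat.doubleFactorial (2*p-1) * q^p)
    = ∑ p ∈ Finset.range K, n.choose (2*p) * Nat.doubleFactorial (2*p-1) * q^p := by
  apply Finset.sum_subset (Finset.range_subset_range.2 hK)
  intro p _ hp
  simp only [Finset.mem_range, not_lt] at hp
  exact term_vanish n p q hp

lemma df_succ (p : ℕ) : Nat.doubleFactorial (2*(p+1)-1) = (2*p+1) * Nat.doubleFactorial (2*p-1) := by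
  match p with
  | 0 => rfl
  | p+1 =>
    have h1 : 2*(p+1+1)-1 = (2*(p+1)-1) + 2 := by omega
    rw [h1, Nat.doubleFactorial_add_two]
    have h2 : 2*(p+1)-1+2 = 2*(p+1)+1 := by omega
    rw [h2]

lemma Wc_closed (q : ℕ) : ∀ n, Wc q n
    = ∑ p ∈ Finset.range (n/2+1), n.choose (2*p) * Nat.doubleFactorial (2*p-1) * q^p
  | 0 => by simp [Wc]
  | 1 => by simp [Wc]
  | n+2 => by
    rw [Wc, Wc_closed q (n+1), Wc_closed q n]
    rw [Wc_extend q (n+2) (n+3) (by omega), Wc_extend q (n+1) (n+3) (by omega),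
      Wc_extend q n (n+2) (by omega)]
    rw [Finset.sum_range_succ' (fun p => (n+1).choose (2*p) * Nat.doubleFactorial (2*p-1) * q^p) (n+2),
        Finset.sum_range_succ' (fun p => (n+2).choose (2*p) * Nat.doubleFactorial (2*p-1) * q^p) (n+2)]
    have key : ∀ p ∈ Finset.range (n+2),
        (n+2).choose (2*(p+1)) * Nat.doubleFactorial (2*(p+1)-1) * q^(p+1)
        = (n+1).choose (2*(p+1)) * Nat.doubleFactorial (2*(p+1)-1) * q^(p+1)
          + q*(n+1) * (n.choose (2*p) * Nat.doubleFactorial (2*p-1) * q^p) := by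
      intro p _
      have pascal : (n+2).choose (2*(p+1)) = (n+1).choose (2*(p+1)) + (n+1).choose (2*p+1) := by
        have h3 : 2*(p+1) = (2*p+1) + 1 := by omega
        rw [h3, Nat.choose_succ_succ']
        omega
      rw [pascal, Nat.add_mul, Nat.add_mul]
      congr 1
      rw [df_succ]
      have key2 : (n+1).choose (2*p+1) * (2*p+1) = (n+1) * n.choose (2*p) := by
        rw [← Nat.add_one_mul_choose_eq]
      calc (n+1).choose (2*p+1) * ((2*p+1) * Nat.doubleFactorial (2*p-1)) * q^(p+1)
          = ((n+1).choose (2*p+1) * (2*p+1)) * Nat.doubleFactorial (2*p-1) * (q * q^p) := by ring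
        _ = q * (n+1) * (n.choose (2*p) * Nat.doubleFactorial (2*p-1) * q^p) := by rw [key2]; ring
    rw [Finset.sum_congr rfl key, Finset.sum_add_distrib, ← Finset.mul_sum]
    norm_num
    ring

structure Pairing (α : Type) (r : ℕ) where
  σ : α → α
  δ : α → ℤ
  invol : ∀ i, σ (σ i) = i
  skew : ∀ i, δ (σ i) = -δ i
  bound : ∀ i, -(r - 1 : ℤ) ≤ δ i ∧ δ i ≤ (r - 1 : ℤ)

theorem Pairing.ext' {α r} {x y : Pairing α r} (h1 : x.σ = y.σ) (h2 : x.δ = y.δ) : x = y := by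
  cases x; cases y; simp_all

def Pairing.congr {α β : Type} {r : ℕ} (e : α ≃ β) : Pairing α r ≃ Pairing β r where
  toFun X := ⟨e ∘ X.σ ∘ e.symm, X.δ ∘ e.symm,
    fun i => by simp [X.invol], fun i => by simp [X.skew], fun i => X.bound _⟩
  invFun Y := ⟨e.symm ∘ Y.σ ∘ e, Y.δ ∘ e,
    fun i => by simp [Y.invol], fun i => by simp [Y.skew], fun i => Y.bound _⟩
  left_inv X := Pairing.ext' (by funext i; simp) (by funext i; simp)
  right_inv Y := Pairing.ext' (by funext i; simp) (by funext i; simp)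

instance Pairing.finite {α : Type} {r : ℕ} [Finite α] : Finite (Pairing α r) := by
  apply Finite.of_injective
    (fun X : Pairing α r => ((X.σ, fun a => ⟨X.δ a, Finset.mem_Icc.2 (X.bound a)⟩) :
      (α → α) × (α → ↑(Finset.Icc (-(r-1) : ℤ) (r-1)))))
  intro X Y h
  obtain ⟨h1, h2⟩ := Prod.mk.injEq .. ▸ h
  exact Pairing.ext' h1 (by funext a; exact congrArg Subtype.val (congrFun h2 a))

instance pairingUniqueOfEmpty {α : Type} {r : ℕ} [IsEmpty α] : Unique (Pairing α r) where
  default := ⟨isEmptyElim, isEmptyElim, fun i => isEmptyElim i, fun i => isEmptyElim i,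
    fun i => isEmptyElim i⟩
  uniq X := Pairing.ext' (funext fun i => isEmptyElim i) (funext fun i => isEmptyElim i)


def pairingUniqueOfCardOne {α : Type} {r : ℕ} (hr : 1 ≤ r) [Subsingleton α] :
    Unique (Pairing α r) where
  default := ⟨id, 0, fun _ => rfl, fun i => by simp, fun i => by
    have : (1:ℤ) ≤ (r:ℤ) := by exact_mod_cast hr
    constructor <;> simp <;> linarith⟩
  uniq X := Pairing.ext'
    (funext fun i => Subsingleton.elim _ _)
    (funext fun i => by
      have h1 := X.skew i
      rw [Subsingleton.elim (X.σ i) i] at h1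
      have : X.δ i = 0 := by linarith
      simpa using this)

section Decomp

variable {β : Type} [DecidableEq β] {r : ℕ}

abbrev Lab (r : ℕ) : Type := ↑(Finset.Icc (-(r-1) : ℤ) (r-1))

lemma sigA_isSome (X : Pairing (Option β) r) (h : X.σ none = none) (b : β) :
    (X.σ (some b)).isSome := by
  rw [Option.isSome_iff_ne_none]
  intro hc
  have := X.invol (some b)
  rw [hc, h] at this
  exact nomatch this

/-- case A construction: σ fixes `none` -/
def caseA (X : Pairing (Option β) r) (h : X.σ none = none) : Pairing β r where
  σ b := (X.σ (some b)).get (sigA_isSome X h b)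
  δ b := X.δ (some b)
  invol b := by
    have s1 : ∀ c : β, X.σ (some c) = some ((X.σ (some c)).get (sigA_isSome X h c)) :=
      fun c => (Option.some_get _).symm
    have := X.invol (some b)
    rw [s1 b, s1 _] at this
    exact Option.some_injective _ this
  skew b := by
    have := X.skew (some b)
    rwa [show X.σ (some b) = some ((X.σ (some b)).get (sigA_isSome X h b)) from
      (Option.some_get _).symm] at this
  bound b := X.bound (some b)

lemma caseA_spec (X : Pairing (Option β) r) (h : X.σ none = none) (b : β) :
    X.σ (some b) = some ((caseA X h).σ b) := by
  exact (Option.some_get (sigA_isSome X h b)).symm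

lemma sigB_spec (X : Pairing (Option β) r) (b : β) (h : X.σ none = some b)
    (x : {x : β // x ≠ b}) : ∃ c : {x : β // x ≠ b}, X.σ (some x.1) = some c.1 := by
  have hb : X.σ (some b) = none := by
    have := X.invol none; rwa [h] at this
  obtain ⟨x, hx⟩ := x
  cases hc : X.σ (some x) with
  | none =>
    exfalso
    have := X.invol (some x)
    rw [hc, h] at this
    exact hx (Option.some_injective _ this).symm
  | some c =>
    refine ⟨⟨c, ?_⟩, rfl⟩
    intro hcb
    subst hcb
    have := X.invol (some x)
    rw [hc, hb] at this
    exact nomatch this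

lemma sigB_isSome (X : Pairing (Option β) r) (b : β) (h : X.σ none = some b)
    (x : {x : β // x ≠ b}) : (X.σ (some x.1)).isSome := by
  obtain ⟨c, hc⟩ := sigB_spec X b h x
  simp [hc]

lemma sigB_ne (X : Pairing (Option β) r) (b : β) (h : X.σ none = some b)
    (x : {x : β // x ≠ b}) : (X.σ (some x.1)).get (sigB_isSome X b h x) ≠ b := by
  obtain ⟨c, hc⟩ := sigB_spec X b h x
  have : (X.σ (some x.1)).get (sigB_isSome X b h x) = c.1 := by
    simp [hc]
  rw [this]
  exact c.2

/-- case B construction: σ matches `none` with `some b` -/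
def caseB (X : Pairing (Option β) r) (b : β) (h : X.σ none = some b) :
    Lab r × Pairing {x : β // x ≠ b} r :=
  (⟨X.δ (some b), Finset.mem_Icc.2 (X.bound (some b))⟩,
    { σ := fun x => ⟨(X.σ (some x.1)).get (sigB_isSome X b h x), sigB_ne X b h x⟩
      δ := fun x => X.δ (some x.1)
      invol := fun x => by
        have s1 : ∀ y : {x : β // x ≠ b},
            X.σ (some y.1) = some ((X.σ (some y.1)).get (sigB_isSome X b h y)) :=
          fun y => (Option.some_get _).symm
        have := X.invol (some x.1)
        rw [s1 x] at this
        rw [s1 ⟨_, sigB_ne X b h x⟩] at this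
        exact Subtype.ext (Option.some_injective _ this)
      skew := fun x => by
        have := X.skew (some x.1)
        rwa [show X.σ (some x.1) = some ((X.σ (some x.1)).get (sigB_isSome X b h x)) from
          (Option.some_get _).symm] at this
      bound := fun x => X.bound (some x.1) })

lemma caseB_sig_spec (X : Pairing (Option β) r) (b : β) (h : X.σ none = some b)
    (x : {x : β // x ≠ b}) :
    X.σ (some x.1) = some (((caseB X b h).2.σ x).1) := (Option.some_get _).symm


def backA (hr : 1 ≤ r) (Y : Pairing β r) : Pairing (Option β) r where
  σ := Option.map Y.σ
  δ o := o.elim 0 Y.δ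
  invol o := by cases o <;> simp [Y.invol]
  skew o := by cases o <;> simp [Y.skew]
  bound o := by
    cases o with
    | none =>
      have : (1:ℤ) ≤ (r:ℤ) := by exact_mod_cast hr
      constructor <;> simp <;> linarith
    | some a => exact Y.bound a

def backB (b : β) (d : Lab r) (Z : Pairing {x : β // x ≠ b} r) : Pairing (Option β) r where
  σ o := o.elim (some b) (fun x => if hx : x = b then none else some (Z.σ ⟨x, hx⟩).1)
  δ o := o.elim (-d.1) (fun x => if hx : x = b then d.1 else Z.δ ⟨x, hx⟩)
  invol o := by
    match o with
    | none => simp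
    | some x =>
      by_cases hx : x = b
      · subst hx; simp
      · simp only [Option.elim, dif_neg hx]
        rw [dif_neg (Z.σ ⟨x, hx⟩).2]
        show some ((Z.σ (Z.σ ⟨x, hx⟩)).1) = some x
        rw [Z.invol]
  skew o := by
    match o with
    | none => simp
    | some x =>
      by_cases hx : x = b
      · subst hx; simp
      · simp only [Option.elim, dif_neg hx]
        rw [dif_neg (Z.σ ⟨x, hx⟩).2]
        show Z.δ (Z.σ ⟨x, hx⟩) = -Z.δ ⟨x, hx⟩
        exact Z.skew _
  bound o := by
    have hd := Finset.mem_Icc.1 d.2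
    match o with
    | none => constructor <;> simp <;> linarith [hd.1, hd.2]
    | some x =>
      by_cases hx : x = b
      · subst hx; simpa [Option.elim] using hd
      · simp only [Option.elim, dif_neg hx]
        exact Z.bound _

noncomputable def decompFun (X : Pairing (Option β) r) :
    (Pairing β r) ⊕ (Σ b : β, Lab r × Pairing {x : β // x ≠ b} r) :=
  match h : X.σ none with
  | none => Sum.inl (caseA X h)
  | some b => Sum.inr ⟨b, caseB X b h⟩

lemma decompFun_eq_inl (X : Pairing (Option β) r) (h : X.σ none = none) :
    decompFun X = Sum.inl (caseA X h) := by
  unfold decompFun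
  split
  · rfl
  · next b h' => rw [h] at h'; exact nomatch h'

lemma decompFun_eq_inr (X : Pairing (Option β) r) (b : β) (h : X.σ none = some b) :
    decompFun X = Sum.inr ⟨b, caseB X b h⟩ := by
  unfold decompFun
  split
  · next h' => rw [h] at h'; exact nomatch h'
  · next b' h' =>
    rw [h] at h'
    obtain rfl : b' = b := Option.some_injective _ h'.symm
    rfl

noncomputable def decompEquiv (hr : 1 ≤ r) : Pairing (Option β) r ≃
    (Pairing β r) ⊕ (Σ b : β, Lab r × Pairing {x : β // x ≠ b} r) where
  toFun := decompFun
  invFun Y := match Y with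
    | Sum.inl Y => backA hr Y
    | Sum.inr ⟨b, d, Z⟩ => backB b d Z
  left_inv X := by
    cases h : X.σ none with
    | none =>
      rw [decompFun_eq_inl X h]
      refine Pairing.ext' ?_ ?_
      · funext o
        cases o with
        | none => exact h.symm
        | some b => exact (caseA_spec X h b).symm
      · funext o
        cases o with
        | none =>
          have h1 := X.skew none
          rw [h] at h1
          show (0:ℤ) = X.δ none
          linarith
        | some b => rfl
    | some b =>
      rw [decompFun_eq_inr X b h]
      refine Pairing.ext' ?_ ?_
      · funext o
        cases o with
        | none => exact h.symm
        | some x =>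
          show (if hx' : x = b then none else some (((caseB X b h).2.σ ⟨x, hx'⟩).1)) = X.σ (some x)
          by_cases hx : x = b
          · rw [dif_pos hx, hx]
            have h2 := X.invol none
            rw [h] at h2
            exact h2.symm
          · rw [dif_neg hx]
            exact (caseB_sig_spec X b h ⟨x, hx⟩).symm
      · funext o
        cases o with
        | none =>
          show -X.δ (some b) = X.δ none
          have h1 := X.skew none
          rw [h] at h1
          linarith
        | some x =>
          show (if hx' : x = b then X.δ (some b) else (caseB X b h).2.δ ⟨x, hx'⟩) = X.δ (some x)
          by_cases hx : x = b
          · rw [dif_pos hx, hx]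
          · rw [dif_neg hx]
            rfl
  right_inv Y := by
    match Y with
    | Sum.inl Y =>
      have h : (backA hr Y).σ none = none := rfl
      rw [decompFun_eq_inl _ h]
      congr 1
    | Sum.inr ⟨b, d, Z⟩ =>
      have h : (backB b d Z).σ none = some b := rfl
      rw [decompFun_eq_inr _ b h]
      congr 1
      refine Sigma.ext rfl (heq_of_eq ?_)
      refine Prod.ext ?_ ?_
      · apply Subtype.ext
        show (backB b d Z).δ (some b) = d.1
        show (if hx : b = b then d.1 else Z.δ ⟨b, hx⟩) = d.1
        rw [dif_pos rfl]
      · refine Pairing.ext' ?_ ?_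
        · funext x
          apply Subtype.ext
          have := caseB_sig_spec (backB b d Z) b h x
          have h2 : (backB b d Z).σ (some x.1) = some ((Z.σ ⟨x.1, x.2⟩).1) := by
            show (if hx : x.1 = b then none else some ((Z.σ ⟨x.1, hx⟩).1)) = _
            rw [dif_neg x.2]
          rw [h2] at this
          have h3 := (Option.some_injective _ this).symm
          rw [h3]
        · funext x
          show (if hx : x.1 = b then d.1 else Z.δ ⟨x.1, hx⟩) = Z.δ x
          rw [dif_neg x.2]

end Decomp

lemma card_lab {r : ℕ} (hr : 1 ≤ r) : Fintype.card (Lab r) = 2*r - 1 := by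
  rw [Fintype.card_coe, Int.card_Icc]
  omega

lemma card_pairing (r : ℕ) (hr : 1 ≤ r) :
    ∀ (n : ℕ) (α : Type) [DecidableEq α] [Fintype α], Fintype.card α = n →
      Nat.card (Pairing α r) = Wc (2*r-1) n := by
  intro n
  induction n using Nat.strong_induction_on with
  | _ n IH =>
    match n with
    | 0 =>
      intro α _ _ hcard
      haveI : IsEmpty α := Fintype.card_eq_zero_iff.mp hcard
      rw [Nat.card_unique]
      rfl
    | 1 =>
      intro α _ _ hcard
      haveI : Subsingleton α := Fintype.card_le_one_iff_subsingleton.mp (by omega)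
      haveI := pairingUniqueOfCardOne (α := α) (r := r) hr
      rw [Nat.card_unique]
      rfl
    | (n+2) =>
      intro α _ _ hcard
      have e : α ≃ Option (Fin (n+1)) :=
        (Fintype.equivFinOfCardEq hcard).trans (finSuccEquiv (n+1))
      rw [Nat.card_congr ((Pairing.congr e).trans (decompEquiv hr))]
      letI : Fintype (Pairing (Fin (n+1)) r) := Fintype.ofFinite _
      letI : ∀ b : Fin (n+1), Fintype (Pairing {x : Fin (n+1) // x ≠ b} r) :=
        fun b => Fintype.ofFinite _
      rw [Nat.card_eq_fintype_card, Fintype.card_sum, Fintype.card_sigma]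
      have h1 : Fintype.card (Pairing (Fin (n+1)) r) = Wc (2*r-1) (n+1) := by
        rw [← Nat.card_eq_fintype_card]
        exact IH (n+1) (by omega) (Fin (n+1)) (Fintype.card_fin _)
      have h2 : ∀ b : Fin (n+1),
          Fintype.card (Lab r × Pairing {x : Fin (n+1) // x ≠ b} r)
          = (2*r-1) * Wc (2*r-1) n := by
        intro b
        rw [Fintype.card_prod, card_lab hr]
        congr 1
        rw [← Nat.card_eq_fintype_card]
        apply IH n (by omega)
        rw [Fintype.card_subtype_compl, Fintype.card_subtype_eq, Fintype.card_fin]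
        omega
      rw [h1, Finset.sum_congr rfl (fun b _ => h2 b), Finset.sum_const, Finset.card_univ,
        Fintype.card_fin, smul_eq_mul]
      show _ = Wc (2*r-1) (n+2)
      rw [Wc]
      ring
theorem ARBT.ext' {m lam r} {x y : AffineRookBrauerTop m lam r} (h0 : x.through = y.through)
    (h1 : x.σ = y.σ) (h2 : x.δ = y.δ) : x = y := by
  cases x; cases y; simp_all

lemma ARBT.sigma_not_mem {m lam r} (X : AffineRookBrauerTop m lam r) {x : Fin m}
    (hx : x ∉ X.through) : X.σ x ∉ X.through := by
  intro hc
  have h1 := X.through_fixed _ hc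
  have h2 := X.invol x
  have h3 : x = X.σ x := (h1.symm.trans h2).symm
  exact hx (h3 ▸ hc)

def topEquiv (m lam r : ℕ) (hr : 1 ≤ r) : AffineRookBrauerTop m lam r ≃
    Σ T : {s : Finset (Fin m) // s.card = lam}, Pairing {x : Fin m // x ∉ T.1} r where
  toFun X := ⟨⟨X.through, X.card_through⟩,
    { σ := fun x => ⟨X.σ x.1, ARBT.sigma_not_mem X x.2⟩
      δ := fun x => X.δ x.1
      invol := fun x => Subtype.ext (X.invol x.1)
      skew := fun x => X.skew x.1
      bound := fun x => X.bound x.1 }⟩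
  invFun Y :=
    { through := Y.1.1
      σ := fun x => if hx : x ∈ Y.1.1 then x else (Y.2.σ ⟨x, hx⟩).1
      δ := fun x => if hx : x ∈ Y.1.1 then 0 else Y.2.δ ⟨x, hx⟩
      card_through := Y.1.2
      invol := fun x => by
        beta_reduce
        by_cases hx : x ∈ Y.1.1
        · rw [dif_pos hx, dif_pos hx]
        · rw [dif_neg hx, dif_neg (Y.2.σ ⟨x, hx⟩).2]
          show (Y.2.σ (Y.2.σ ⟨x, hx⟩)).1 = x
          rw [Y.2.invol]
      through_fixed := fun x hx => dif_pos hx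
      skew := fun x => by
        beta_reduce
        by_cases hx : x ∈ Y.1.1
        · rw [dif_pos hx, dif_pos hx]; simp
        · rw [dif_neg hx, dif_neg (Y.2.σ ⟨x, hx⟩).2, dif_neg hx]
          show Y.2.δ (Y.2.σ ⟨x, hx⟩) = -Y.2.δ ⟨x, hx⟩
          exact Y.2.skew _
      bound := fun x => by
        beta_reduce
        by_cases hx : x ∈ Y.1.1
        · rw [dif_pos hx]
          have : (1:ℤ) ≤ (r:ℤ) := by exact_mod_cast hr
          constructor <;> linarith
        · rw [dif_neg hx]
          exact Y.2.bound _ }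
  left_inv X := by
    refine ARBT.ext' rfl ?_ ?_
    · funext x
      by_cases hx : x ∈ X.through
      · show (if hx' : x ∈ X.through then x else _) = X.σ x
        rw [dif_pos hx, X.through_fixed x hx]
      · show (if hx' : x ∈ X.through then x else (X.σ x : Fin m)) = X.σ x
        rw [dif_neg hx]
    · funext x
      by_cases hx : x ∈ X.through
      · show (if hx' : x ∈ X.through then (0:ℤ) else _) = X.δ x
        rw [dif_pos hx]
        have h1 := X.skew x
        rw [X.through_fixed x hx] at h1
        linarith
      · show (if hx' : x ∈ X.through then (0:ℤ) else X.δ x) = X.δ x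
        rw [dif_neg hx]
  right_inv Y := by
    obtain ⟨T, Z⟩ := Y
    refine Sigma.ext rfl (heq_of_eq ?_)
    refine Pairing.ext' ?_ ?_
    · funext x
      apply Subtype.ext
      show (if hx : x.1 ∈ T.1 then x.1 else (Z.σ ⟨x.1, hx⟩).1) = (Z.σ x).1
      rw [dif_neg x.2]
    · funext x
      show (if hx : x.1 ∈ T.1 then (0:ℤ) else Z.δ ⟨x.1, hx⟩) = Z.δ x
      rw [dif_neg x.2]

open Finset in
/-- The cardinality of the top set `T_{m,r}(λ)` for the `r`-reduced affine rook-Brauer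
algebra is `C(m,λ) · ∑_{p=0}^{⌊(m-λ)/2⌋} C(m-λ, 2p)·(2p-1)!!·(2r-1)^p`. -/
theorem stmt_5 (m lam r : ℕ) (h : lam ≤ m) (hr : 1 ≤ r) :
    Nat.card (AffineRookBrauerTop m lam r)
      = m.choose lam *
          ∑ p ∈ Finset.range ((m - lam) / 2 + 1),
            (m - lam).choose (2 * p) * Nat.doubleFactorial (2 * p - 1) * (2 * r - 1) ^ p := by
  classical
  rw [Nat.card_congr (topEquiv m lam r hr)]
  letI : ∀ T : {s : Finset (Fin m) // s.card = lam},
      Fintype (Pairing {x : Fin m // x ∉ T.1} r) := fun T => Fintype.ofFinite _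
  rw [Nat.card_eq_fintype_card, Fintype.card_sigma]
  have hT : ∀ T : {s : Finset (Fin m) // s.card = lam},
      Fintype.card (Pairing {x : Fin m // x ∉ T.1} r) = Wc (2*r-1) (m - lam) := by
    intro T
    rw [← Nat.card_eq_fintype_card]
    apply card_pairing r hr
    rw [Fintype.card_subtype_compl]
    simp [T.2]
  rw [Finset.sum_congr rfl (fun T _ => hT T), Finset.sum_const, Finset.card_univ, smul_eq_mul]
  have hidx : Fintype.card {s : Finset (Fin m) // s.card = lam} = m.choose lam := by
    rw [Fintype.card_subtype]
    have he : (Finset.univ.filter fun s : Finset (Fin m) => s.card = lam)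
        = Finset.powersetCard lam Finset.univ := by
      ext s; simp [Finset.mem_powersetCard_univ]
    rw [he, Finset.card_powersetCard, Finset.card_univ, Fintype.card_fin]
  rw [hidx, Wc_closed]
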